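/- If X ∈ ℝ^{n₁×n₂} has rank exactly r, and p, q are index lists of length r such that the submatrix X(p,q) is invertible, then the CUR approximation is exact: X = X(:,q) X(p,q)⁻¹ X(p,:). -/

import Mathlib

open Matrix

theorem cur_exact_of_rank_r {n₁ n₂ r : ℕ}
    (X : Matrix (Fin n₁) (Fin n₂) ℝ) (p : Fin r → Fin n₁) (q : Fin r → Fin n₂)
    (hrank : X.rank = r) (h : IsUnit (X.submatrix p q)) :
    X = X.submatrix id q * (X.submatrix p q)⁻¹ * X.submatrix p id := by
  set C := X.submatrix id q with hC
  set A := X.submatrix p q with hA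
  -- rank of A is r
  have hArank : A.rank = r := by
    rw [Matrix.rank_of_isUnit A h, Fintype.card_fin]
  -- A = P * C for a row-selection matrix P, so rank C ≥ r
  have hPC : ((1 : Matrix (Fin n₁) (Fin n₁) ℝ).submatrix p (Equiv.refl (Fin n₁))) * C = A := by
    rw [Matrix.one_submatrix_mul]
    ext i j
    simp [hC, hA]
  have hCrank : C.rank = r := by
    refine le_antisymm (C.rank_le_card_width.trans (by simp)) ?_
    calc r = A.rank := hArank.symm
    _ = (((1 : Matrix (Fin n₁) (Fin n₁) ℝ).submatrix p (Equiv.refl (Fin n₁))) * C).rank := by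
        rw [hPC]
    _ ≤ C.rank := Matrix.rank_mul_le_right _ _
  -- ranges coincide
  have hle : LinearMap.range C.mulVecLin ≤ LinearMap.range X.mulVecLin := by
    rw [Matrix.range_mulVecLin, Matrix.range_mulVecLin]
    apply Submodule.span_mono
    rintro _ ⟨j, rfl⟩
    exact ⟨q j, rfl⟩
  have hrange : LinearMap.range C.mulVecLin = LinearMap.range X.mulVecLin := by
    apply Submodule.eq_of_le_of_finrank_eq hle
    have : Module.finrank ℝ (LinearMap.range C.mulVecLin) = C.rank := rfl
    rw [this, hCrank]
    exact hrank.symm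
  -- each column of X is C *ᵥ something
  have hcol : ∀ j : Fin n₂, ∃ w : Fin r → ℝ, C.mulVec w = fun i => X i j := by
    intro j
    have : (fun i => X i j) ∈ LinearMap.range X.mulVecLin := by
      refine ⟨Pi.single j 1, ?_⟩
      ext i
      simp [Matrix.mulVecLin, Matrix.mulVec_single]
    rw [← hrange] at this
    obtain ⟨w, hw⟩ := this
    exact ⟨w, hw⟩
  choose w hw using hcol
  set W : Matrix (Fin r) (Fin n₂) ℝ := fun k j => w j k with hWdef
  have hCW : C * W = X := by
    ext i j
    have := congrFun (hw j) i
    show ∑ k, C i k * w j k = X i j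
    simpa [Matrix.mulVec, Matrix.mul_apply, dotProduct, hWdef, mul_comm] using this
  have hAW : A * W = X.submatrix p id := by
    have : (C * W).submatrix p id = C.submatrix p id * W := by
      ext i j
      simp [Matrix.mul_apply]
    rw [hCW] at this
    have hCA : C.submatrix p id = A := by
      ext i j; simp [hC, hA]
    rw [hCA] at this
    exact this.symm ▸ rfl
  have hdet : IsUnit A.det := (Matrix.isUnit_iff_isUnit_det A).mp h
  calc X = C * W := hCW.symm
  _ = C * ((A⁻¹ * A) * W) := by rw [Matrix.nonsing_inv_mul A hdet, Matrix.one_mul]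
  _ = C * A⁻¹ * (A * W) := by rw [Matrix.mul_assoc, Matrix.mul_assoc]
  _ = C * A⁻¹ * X.submatrix p id := by rw [hAW]
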